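/- Let A and B be nonempty closed convex subsets of X, set T := P_B ∘ P_A, and suppose T has no fixed point. Fix x ∈ X and define b₀ := x, a_{n+1} := P_A(b_n), b_{n+1} := P_B(a_{n+1}) for all n ∈ ℕ. Let g be the unique point of the closed convex set closure(B − A) of minimal norm (i.e. the projection of 0 onto closure{b − a : b ∈ B, a ∈ A}). Then ‖a_n‖ → +∞, ‖b_n‖ → +∞, b_n − a_n → g (for n ≥ 1), and a_{n+1} − b_n → −g. -/

import Mathlib

open Filter Topology Pointwise
open RealInnerProductSpace

variable {X : Type*} [NormedAddCommGroup X] [InnerProductSpace ℝ X] [FiniteDimensional ℝ X]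

/-- `P` is the projector onto the set `C`: `P x` is a point of `C` nearest to `x`. -/
def IsProjector (C : Set X) (P : X → X) : Prop :=
  ∀ x : X, P x ∈ C ∧ ∀ y ∈ C, ‖x - P x‖ ≤ ‖x - y‖

lemma IsProjector.inner_le {C : Set X} (hC : Convex ℝ C) {P : X → X}
    (hP : IsProjector C P) (x : X) {c : X} (hc : c ∈ C) : ⟪x - P x, c - P x⟫ ≤ 0 := by
  have hmem := (hP x).1
  have heq : (‖x - P x‖ = ⨅ w : C, ‖x - w‖) := by
    haveI : Nonempty C := ⟨⟨P x, hmem⟩⟩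
    refine le_antisymm (le_ciInf fun w => (hP x).2 w w.2) ?_
    have hbdd : BddBelow (Set.range fun w : C => ‖x - (w : X)‖) :=
      ⟨0, by rintro r ⟨w, rfl⟩; exact norm_nonneg _⟩
    exact ciInf_le hbdd ⟨P x, hmem⟩
  exact (norm_eq_iInf_iff_real_inner_le_zero hC hmem).1 heq c hc

lemma IsProjector.pythagoras {C : Set X} (hC : Convex ℝ C) {P : X → X}
    (hP : IsProjector C P) (x : X) {c : X} (hc : c ∈ C) :
    ‖x - P x‖ ^ 2 + ‖P x - c‖ ^ 2 ≤ ‖x - c‖ ^ 2 := by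
  have h := hP.inner_le hC x hc
  have hexp : ‖x - c‖ ^ 2 = ‖x - P x‖ ^ 2 + 2 * ⟪x - P x, P x - c⟫ + ‖P x - c‖ ^ 2 := by
    have hd : x - c = (x - P x) + (P x - c) := by abel
    rw [hd, @norm_add_sq_real]
  have h2 : ⟪x - P x, P x - c⟫ = - ⟪x - P x, c - P x⟫ := by
    rw [← inner_neg_right]; congr 1; abel
  nlinarith [h]

lemma IsProjector.lipschitz {C : Set X} (hC : Convex ℝ C) {P : X → X}
    (hP : IsProjector C P) : LipschitzWith 1 P := by
  rw [lipschitzWith_iff_dist_le_mul]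
  intro x y
  simp only [NNReal.coe_one, one_mul, dist_eq_norm]
  have h1 := hP.inner_le hC x (hP y).1
  have h2 := hP.inner_le hC y (hP x).1
  have e : ⟪x - y, P x - P y⟫
      = ⟪x - P x, P x - P y⟫ + ‖P x - P y‖ ^ 2 + ⟪P y - y, P x - P y⟫ := by
    rw [← real_inner_self_eq_norm_sq, ← inner_add_left, ← inner_add_left]
    congr 1; abel
  have t1 : 0 ≤ ⟪x - P x, P x - P y⟫ := by
    have hr : ⟪x - P x, P x - P y⟫ = - ⟪x - P x, P y - P x⟫ := by
      rw [← inner_neg_right]; congr 1; abel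
    rw [hr]; linarith
  have t2 : 0 ≤ ⟪P y - y, P x - P y⟫ := by
    have hr : ⟪P y - y, P x - P y⟫ = - ⟪y - P y, P x - P y⟫ := by
      rw [← inner_neg_left]; congr 1; abel
    rw [hr]; linarith
  have key : ‖P x - P y‖ ^ 2 ≤ ⟪x - y, P x - P y⟫ := by linarith
  have hcs := real_inner_le_norm (x - y) (P x - P y)
  rcases eq_or_lt_of_le (norm_nonneg (P x - P y)) with h0 | h0
  · rw [← h0]; exact norm_nonneg _
  · nlinarith

lemma minnorm_inner_nonneg {K : Set X} (hK : Convex ℝ K) {g : X} (hg : g ∈ K)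
    (hmin : ∀ y ∈ K, ‖g‖ ≤ ‖y‖) : ∀ y ∈ K, 0 ≤ ⟪g, y - g⟫ := by
  intro y hy
  haveI : Nonempty K := ⟨⟨g, hg⟩⟩
  have heq : ‖(0:X) - g‖ = ⨅ w : K, ‖(0:X) - w‖ := by
    refine le_antisymm (le_ciInf fun w => by
      simpa [norm_neg, zero_sub] using hmin w w.2) ?_
    have hbdd : BddBelow (Set.range fun w : K => ‖(0:X) - (w : X)‖) :=
      ⟨0, by rintro r ⟨w, rfl⟩; exact norm_nonneg _⟩
    exact ciInf_le hbdd ⟨g, hg⟩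
  have h := (norm_eq_iInf_iff_real_inner_le_zero hK hg).1 heq y hy
  rw [zero_sub, inner_neg_left] at h; linarith

lemma sum_le_sqrt_card_mul {M : ℕ} {e : ℕ → ℝ} (he : ∀ n, 0 ≤ e n) {S : ℝ}
    (hsq : ∑ m ∈ Finset.range M, e m ^ 2 ≤ S) :
    ∑ m ∈ Finset.range M, e m ≤ Real.sqrt M * Real.sqrt S := by
  have hS0 : 0 ≤ S := le_trans (Finset.sum_nonneg fun i _ => sq_nonneg _) hsq
  have h := Finset.sum_mul_sq_le_sq_mul_sq (Finset.range M) (fun _ => (1:ℝ)) e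
  simp only [one_mul, one_pow, Finset.sum_const, Finset.card_range, nsmul_eq_mul, mul_one] at h
  have h2 : (∑ m ∈ Finset.range M, e m) ^ 2 ≤ (M : ℝ) * S := by
    calc (∑ m ∈ Finset.range M, e m) ^ 2 ≤ (M:ℝ) * ∑ m ∈ Finset.range M, e m ^ 2 := h
    _ ≤ (M:ℝ) * S := by
        exact mul_le_mul_of_nonneg_left hsq (Nat.cast_nonneg M)
  have h3 : ∑ m ∈ Finset.range M, e m = Real.sqrt ((∑ m ∈ Finset.range M, e m) ^ 2) :=
    (Real.sqrt_sq (Finset.sum_nonneg fun i _ => he i)).symm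
  rw [h3, ← Real.sqrt_mul (Nat.cast_nonneg M)]
  exact Real.sqrt_le_sqrt h2

lemma freq_small {c : ℕ → ℝ} (hc : ∀ n, 0 ≤ c n) {S : ℝ}
    (hS : ∀ M, ∑ m ∈ Finset.range M, c m ^ 2 ≤ S) {α β ε : ℝ} (hα : 0 ≤ α) (hβ : 0 ≤ β)
    (hε : 0 < ε) : ∃ᶠ n in atTop, c n * (α + Real.sqrt n * β) < ε := by
  by_contra hcon
  rw [Filter.not_frequently] at hcon
  rw [Filter.eventually_atTop] at hcon
  obtain ⟨N, hN⟩ := hcon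
  set K := α + β with hK
  have hK0 : 0 ≤ K := by positivity
  rcases eq_or_lt_of_le hK0 with hK1 | hK1
  · have := hN N le_rfl
    push_neg at this
    have hα0 : α = 0 := by linarith [hβ]
    have hβ0 : β = 0 := by linarith [hα]
    simp [hα0, hβ0] at this
    linarith
  have key : ∀ m, N ≤ m → ε ^ 2 / (4 * K ^ 2) * (1 / ((m : ℝ) + 1)) ≤ c m ^ 2 := by
    intro m hm
    have h1 : ε ≤ c m * (α + Real.sqrt m * β) := by
      have := hN m hm; push_neg at this; exact this
    have hsm : Real.sqrt m ≤ Real.sqrt (m + 1) := by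
      apply Real.sqrt_le_sqrt; push_cast; linarith
    have hsq : Real.sqrt ((m:ℝ) + 1) ^ 2 = (m:ℝ) + 1 := Real.sq_sqrt (by positivity)
    have h1s : (1:ℝ) ≤ Real.sqrt ((m:ℝ) + 1) := by
      nlinarith [Real.sqrt_nonneg ((m:ℝ)+1), (Nat.cast_nonneg m : (0:ℝ) ≤ (m:ℝ))]
    have h2 : α + Real.sqrt m * β ≤ 2 * K * Real.sqrt (m + 1) := by
      have : α + Real.sqrt m * β ≤ K * 1 + K * Real.sqrt (m+1) := by
        have hb : Real.sqrt m * β ≤ Real.sqrt (m+1) * K := by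
          apply mul_le_mul hsm (by simp [hK]; linarith) hβ (Real.sqrt_nonneg _)
        nlinarith [Real.sqrt_nonneg ((m:ℝ)+1)]
      nlinarith [h1s]
    have h3 : ε ≤ c m * (2 * K * Real.sqrt (m + 1)) := by
      refine le_trans h1 (mul_le_mul_of_nonneg_left h2 (hc m))
    have h4 : ε ^ 2 ≤ 4 * K ^2 * ((m:ℝ)+1) * c m ^ 2 := by
      have h4' := pow_le_pow_left₀ hε.le h3 2
      have he : (c m * (2*K*Real.sqrt ((m:ℝ)+1)))^2 = 4*K^2*((m:ℝ)+1)* c m ^2 := by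
        rw [mul_pow, mul_pow, mul_pow, hsq]; ring
      rw [he] at h4'; exact h4'
    rw [div_mul_eq_mul_div, mul_one_div, div_div, div_le_iff₀ (by positivity)]
    nlinarith
  set C0 := ε ^ 2 / (4 * K ^ 2) with hC0
  have hC0pos : 0 < C0 := by positivity
  set H : ℕ → ℝ := fun M => ∑ i ∈ Finset.range M, (1 / ((i:ℝ) + 1)) with hH
  have hdiv : Tendsto H atTop atTop := Real.tendsto_sum_range_one_div_nat_succ_atTop
  have hbound : ∀ M, N ≤ M → C0 * (H M - H N) ≤ S := by
    intro M hM
    have e1 : H M - H N = ∑ i ∈ Finset.Ico N M, (1 / ((i:ℝ) + 1)) := by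
      rw [hH]; rw [Finset.sum_Ico_eq_sub _ hM]
    have e2 : ∑ i ∈ Finset.Ico N M, (C0 * (1 / ((i:ℝ) + 1))) ≤ ∑ i ∈ Finset.Ico N M, c i ^ 2 := by
      apply Finset.sum_le_sum
      intro i hi
      exact key i (Finset.mem_Ico.1 hi).1
    have e3 : ∑ i ∈ Finset.Ico N M, c i ^ 2 ≤ ∑ i ∈ Finset.range M, c i ^ 2 := by
      apply Finset.sum_le_sum_of_subset_of_nonneg
      · intro i hi; exact Finset.mem_range.2 (Finset.mem_Ico.1 hi).2
      · intro i _ _; exact sq_nonneg _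
    rw [e1]
    calc C0 * ∑ i ∈ Finset.Ico N M, (1/((i:ℝ)+1)) ≤ ∑ i ∈ Finset.Ico N M, c i ^2 := by
          rw [Finset.mul_sum]; exact e2
      _ ≤ ∑ i ∈ Finset.range M, c i ^ 2 := e3
      _ ≤ S := hS M
  have hev : ∀ᶠ M in atTop, H N + S / C0 + 1 ≤ H M := hdiv.eventually_ge_atTop _
  obtain ⟨M, hM1, hM2⟩ := (hev.and (eventually_ge_atTop N)).exists
  have hfin := hbound M hM2
  rw [mul_sub] at hfin
  have hfin2 : C0 * H M ≤ S + C0 * H N := by linarith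
  have hle : C0 * (H N + S / C0 + 1) ≤ C0 * H M := mul_le_mul_of_nonneg_left hM1 hC0pos.le
  rw [mul_add, mul_add, mul_div_cancel₀ _ (ne_of_gt hC0pos)] at hle
  linarith

/-- For fixed-point free `T = P_B ∘ P_A` and the alternating
projection sequences `b₀ = x`, `a_{n+1} = P_A b_n`, `b_{n+1} = P_B a_{n+1}`, one has
`‖a_n‖ → ∞`, `‖b_n‖ → ∞`, `b_n − a_n → g` (for `n ≥ 1`) and `a_{n+1} − b_n → −g`,
where `g` is the minimal-norm element of `closure (B − A)`. -/
theorem stmt8 (A B : Set X) (hAne : A.Nonempty) (hAcl : IsClosed A) (hAconv : Convex ℝ A)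
    (hBne : B.Nonempty) (hBcl : IsClosed B) (hBconv : Convex ℝ B)
    (PA PB : X → X) (hPA : IsProjector A PA) (hPB : IsProjector B PB)
    (T : X → X) (hT : T = PB ∘ PA) (hfix : ∀ x : X, T x ≠ x)
    (x : X) (a b : ℕ → X) (hb0 : b 0 = x)
    (ha : ∀ n : ℕ, a (n + 1) = PA (b n))
    (hb : ∀ n : ℕ, b (n + 1) = PB (a (n + 1)))
    (g : X) (hg : g ∈ closure (B - A))
    (hgmin : ∀ y ∈ closure (B - A), ‖g‖ ≤ ‖y‖) :
    Tendsto (fun n : ℕ => ‖a n‖) atTop atTop ∧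
    Tendsto (fun n : ℕ => ‖b n‖) atTop atTop ∧
    Tendsto (fun n : ℕ => b (n + 1) - a (n + 1)) atTop (nhds g) ∧
    Tendsto (fun n : ℕ => a (n + 1) - b n) atTop (nhds (-g)) := by
  classical
  -- memberships
  have haA : ∀ n : ℕ, a (n+1) ∈ A := fun n => (ha n) ▸ (hPA (b n)).1
  have hbB : ∀ n : ℕ, b (n+1) ∈ B := fun n => (hb n) ▸ (hPB (a (n+1))).1
  -- variational inequalities
  have VIA : ∀ n : ℕ, ∀ p ∈ A, ⟪b n - a (n+1), p - a (n+1)⟫ ≤ 0 := by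
    intro n p hp
    have := hPA.inner_le hAconv (b n) hp
    rwa [← ha n] at this
  have VIB : ∀ n : ℕ, ∀ q ∈ B, ⟪a (n+1) - b (n+1), q - b (n+1)⟫ ≤ 0 := by
    intro n q hq
    have := hPB.inner_le hBconv (a (n+1)) hq
    rwa [← hb n] at this
  set D : ℕ → X := fun n => b n - a (n+1) with hDdef
  set E : ℕ → X := fun n => b (n+1) - a (n+1) with hEdef
  -- convexity of closure (B - A)
  have hconvBA : Convex ℝ (closure (B - A)) := (hBconv.sub hAconv).closure
  have hgVI : ∀ y ∈ closure (B - A), 0 ≤ ⟪g, y - g⟫ :=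
    minnorm_inner_nonneg hconvBA hg hgmin
  -- basic norm inequalities
  have hED : ∀ n : ℕ, ‖E (n+1)‖ ≤ ‖D (n+1)‖ := by
    intro n
    have h := (hPB (a (n+2))).2 (b (n+1)) (hbB n)
    rw [← hb (n+1)] at h
    simp only [hDdef, hEdef]
    rw [norm_sub_rev, show ‖b (n+1) - a (n+1+1)‖ = ‖a (n+2) - b (n+1)‖ from norm_sub_rev _ _]
    exact h
  have hDE : ∀ n : ℕ, ‖D (n+1)‖ ≤ ‖E n‖ := by
    intro n
    have h := (hPA (b (n+1))).2 (a (n+1)) (haA n)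
    rw [← ha (n+1)] at h
    simpa [hDdef, hEdef] using h
  have hsqB : ∀ n : ℕ, ‖E (n+1)‖^2 + ‖b (n+2) - b (n+1)‖^2 ≤ ‖D (n+1)‖^2 := by
    intro n
    have h := hPB.pythagoras hBconv (a (n+2)) (hbB n)
    rw [← hb (n+1)] at h
    simp only [hDdef, hEdef]
    calc ‖b (n+1+1) - a (n+1+1)‖^2 + ‖b (n+2) - b (n+1)‖^2
        = ‖a (n+2) - b (n+2)‖^2 + ‖b (n+2) - b (n+1)‖^2 := by rw [norm_sub_rev]
      _ ≤ ‖a (n+2) - b (n+1)‖^2 := h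
      _ = ‖b (n+1) - a (n+1+1)‖^2 := by rw [norm_sub_rev]
  have hsqA : ∀ n : ℕ, ‖D (n+1)‖^2 + ‖a (n+2) - a (n+1)‖^2 ≤ ‖E n‖^2 := by
    intro n
    have h := hPA.pythagoras hAconv (b (n+1)) (haA n)
    rw [← ha (n+1)] at h
    simpa [hDdef, hEdef] using h
  -- the decreasing norm sequence
  set u : ℕ → ℝ := fun n => ‖D (n+1)‖ with hudef
  have hu_anti : Antitone u := by
    apply antitone_nat_of_succ_le
    intro n
    exact (hDE (n+1)).trans (hED n)
  have hu_nonneg : ∀ n, 0 ≤ u n := fun n => norm_nonneg _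
  have hubdd : BddBelow (Set.range u) := ⟨0, by rintro r ⟨n, rfl⟩; exact hu_nonneg n⟩
  set L : ℝ := ⨅ n, u n with hLdef
  have hLtend : Tendsto u atTop (𝓝 L) := tendsto_atTop_ciInf hu_anti hubdd
  have hLle : ∀ n, L ≤ u n := fun n => ciInf_le hubdd n
  have hL0 : 0 ≤ L := le_ciInf hu_nonneg
  -- memberships in B - A
  have hDm : ∀ n : ℕ, D (n+1) ∈ B - A := fun n => Set.sub_mem_sub (hbB n) (haA (n+1))
  have hEm : ∀ n : ℕ, E n ∈ B - A := fun n => Set.sub_mem_sub (hbB n) (haA n)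
  set d : ℝ := ‖g‖ with hddef
  have hdL : d ≤ L := le_ciInf fun n => hgmin _ (subset_closure (hDm n))
  -- square-summability of the increments
  set cs : ℕ → ℝ := fun n => ‖a (n+2) - a (n+1)‖ with hcsdef
  set es : ℕ → ℝ := fun n => ‖b (n+2) - b (n+1)‖ with hesdef
  have hcsum : ∀ M : ℕ, ∑ m ∈ Finset.range M, cs m ^ 2 ≤ ‖E 0‖^2 := by
    intro M
    have term : ∀ m : ℕ, cs m ^2 ≤ ‖E m‖^2 - ‖E (m+1)‖^2 := by
      intro m
      have h1 := hsqA m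
      have h2 : ‖E (m+1)‖^2 ≤ ‖D (m+1)‖^2 :=
        pow_le_pow_left₀ (norm_nonneg _) (hED m) 2
      simp only [hcsdef]
      linarith
    calc ∑ m ∈ Finset.range M, cs m ^2 ≤ ∑ m ∈ Finset.range M, (‖E m‖^2 - ‖E (m+1)‖^2) :=
          Finset.sum_le_sum fun m _ => term m
      _ = ‖E 0‖^2 - ‖E M‖^2 := Finset.sum_range_sub' (fun m => ‖E m‖^2) M
      _ ≤ ‖E 0‖^2 := by nlinarith [sq_nonneg ‖E M‖]
  have hesum : ∀ M : ℕ, ∑ m ∈ Finset.range M, es m ^ 2 ≤ u 0 ^2 := by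
    intro M
    have term : ∀ m : ℕ, es m ^2 ≤ u m ^2 - u (m+1) ^2 := by
      intro m
      have h1 := hsqB m
      have h2 : u (m+1) ^2 ≤ ‖E (m+1)‖^2 :=
        pow_le_pow_left₀ (norm_nonneg _) (hDE (m+1)) 2
      simp only [hesdef, hudef] at *
      linarith
    calc ∑ m ∈ Finset.range M, es m ^2 ≤ ∑ m ∈ Finset.range M, (u m ^2 - u (m+1) ^2) :=
          Finset.sum_le_sum fun m _ => term m
      _ = u 0 ^2 - u M ^2 := Finset.sum_range_sub' (fun m => u m ^2) M
      _ ≤ u 0 ^2 := by nlinarith [sq_nonneg (u M)]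
  -- distance growth bound for b
  have hbdist : ∀ (q : X) (M : ℕ), ‖q - b (M+1)‖ ≤ ‖q - b 1‖ + Real.sqrt M * u 0 := by
    intro q M
    have htel : b (M+1) - b 1 = ∑ m ∈ Finset.range M, (b (m+2) - b (m+1)) :=
      (Finset.sum_range_sub (fun m => b (m+1)) M).symm
    have h1 : ‖b (M+1) - b 1‖ ≤ ∑ m ∈ Finset.range M, es m := by
      rw [htel]
      exact norm_sum_le _ _
    have h2 : ∑ m ∈ Finset.range M, es m ≤ Real.sqrt M * Real.sqrt (u 0 ^ 2) :=
      sum_le_sqrt_card_mul (fun n => norm_nonneg _) (hesum M)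
    rw [Real.sqrt_sq (hu_nonneg 0)] at h2
    calc ‖q - b (M+1)‖ = ‖(q - b 1) - (b (M+1) - b 1)‖ := by congr 1; abel
      _ ≤ ‖q - b 1‖ + ‖b (M+1) - b 1‖ := norm_sub_le _ _
      _ ≤ ‖q - b 1‖ + Real.sqrt M * u 0 := by linarith
  -- key inequality
  have hkey : ∀ (m : ℕ), ∀ q ∈ B, ∀ p ∈ A,
      u m ^ 2 ≤ ⟪D (m+1), q - p⟫ + cs m * ‖q - b (m+1)‖ := by
    intro m q hq p hp
    have t2 : 0 ≤ ⟪D (m+1), a (m+2) - p⟫ := by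
      have h := VIA (m+1) p hp
      have hr : ⟪D (m+1), a (m+2) - p⟫ = - ⟪b (m+1) - a (m+2), p - a (m+2)⟫ := by
        simp only [hDdef]
        rw [← inner_neg_right]
        congr 1; abel
      rw [hr]
      simpa using h
    have t3 : 0 ≤ ⟪b (m+1) - a (m+1), q - b (m+1)⟫ := by
      have h := VIB m q hq
      have hr : ⟪b (m+1) - a (m+1), q - b (m+1)⟫ = - ⟪a (m+1) - b (m+1), q - b (m+1)⟫ := by
        rw [← inner_neg_left]; congr 1; abel
      rw [hr]; linarith
    have t4 : -(cs m * ‖q - b (m+1)‖) ≤ ⟪a (m+1) - a (m+2), q - b (m+1)⟫ := by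
      have h := real_inner_le_norm (a (m+2) - a (m+1)) (q - b (m+1))
      have hr : ⟪a (m+1) - a (m+2), q - b (m+1)⟫ = - ⟪a (m+2) - a (m+1), q - b (m+1)⟫ := by
        rw [← inner_neg_left]; congr 1; abel
      rw [hr]
      simp only [hcsdef]
      linarith
    have hdec : ⟪D (m+1), q - p⟫ = ⟪D (m+1), D (m+1)⟫
        + (⟪b (m+1) - a (m+1), q - b (m+1)⟫ + ⟪a (m+1) - a (m+2), q - b (m+1)⟫)
        + ⟪D (m+1), a (m+2) - p⟫ := by
      have hmid : ⟪b (m+1) - a (m+1), q - b (m+1)⟫ + ⟪a (m+1) - a (m+2), q - b (m+1)⟫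
          = ⟪D (m+1), q - b (m+1)⟫ := by
        rw [← inner_add_left]
        congr 1
        simp only [hDdef]; abel
      rw [hmid, ← inner_add_right, ← inner_add_right]
      congr 1
      simp only [hDdef]; abel
    have hself : ⟪D (m+1), D (m+1)⟫ = u m ^ 2 := by
      rw [real_inner_self_eq_norm_sq]
    linarith
  -- L ≤ ‖q - p‖ for all q ∈ B, p ∈ A
  have hLy : ∀ q ∈ B, ∀ p ∈ A, L ≤ ‖q - p‖ := by
    intro q hq p hp
    have main : ∀ δ : ℝ, 0 < δ → L^2 ≤ L * ‖q - p‖ + δ := by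
      intro δ hδ
      have hev : ∀ᶠ m in atTop, u m * ‖q - p‖ < L * ‖q - p‖ + δ/2 := by
        have ht : Tendsto (fun m => u m * ‖q - p‖) atTop (𝓝 (L * ‖q - p‖)) :=
          hLtend.mul_const _
        exact ht.eventually (gt_mem_nhds (by linarith))
      have hfr : ∃ᶠ m in atTop, cs m * (‖q - b 1‖ + Real.sqrt m * u 0) < δ/2 :=
        freq_small (fun n => norm_nonneg _) hcsum (norm_nonneg _) (hu_nonneg 0) (by linarith)
      obtain ⟨m, h1, h2⟩ := (hfr.and_eventually hev).exists
      have k := hkey m q hq p hp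
      have hbd := hbdist q m
      have his : ⟪D (m+1), q - p⟫ ≤ u m * ‖q - p‖ := by
        have := real_inner_le_norm (D (m+1)) (q - p)
        simpa [hudef] using this
      have hL2 : L^2 ≤ u m ^2 := pow_le_pow_left₀ hL0 (hLle m) 2
      have hcs0 : 0 ≤ cs m := norm_nonneg _
      have hb2 : cs m * ‖q - b (m+1)‖ ≤ cs m * (‖q - b 1‖ + Real.sqrt m * u 0) :=
        mul_le_mul_of_nonneg_left hbd hcs0
      linarith
    by_cases hL : L = 0
    · rw [hL]; exact norm_nonneg _
    · have hLpos : 0 < L := lt_of_le_of_ne hL0 (Ne.symm hL)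
      have h2 : L^2 ≤ L * ‖q - p‖ := le_of_forall_pos_le_add main
      nlinarith
  -- L ≤ d, hence L = d
  have hLd : L = d := by
    refine le_antisymm ?_ hdL
    refine le_of_forall_pos_le_add ?_
    intro ε hε
    obtain ⟨z, hz, hdist⟩ := Metric.mem_closure_iff.1 hg ε hε
    obtain ⟨q, hq, p, hp, rfl⟩ := hz
    have h1 := hLy q hq p hp
    have h2 : ‖q - p‖ ≤ d + ε := by
      have : ‖q - p‖ ≤ ‖g‖ + ‖g - (q - p)‖ := by
        calc ‖q - p‖ = ‖g - (g - (q - p))‖ := by congr 1; abel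
          _ ≤ ‖g‖ + ‖g - (q - p)‖ := norm_sub_le _ _
      rw [dist_eq_norm] at hdist
      simp only [hddef]
      linarith
    linarith
  have hutend : Tendsto u atTop (𝓝 d) := hLd ▸ hLtend
  -- ‖E n‖ → d
  have hEnorm : Tendsto (fun n => ‖E n‖) atTop (𝓝 d) := by
    rw [← tendsto_add_atTop_iff_nat 1]
    have hlow : ∀ n : ℕ, u (n+1) ≤ ‖E (n+1)‖ := fun n => hDE (n+1)
    have hup : ∀ n : ℕ, ‖E (n+1)‖ ≤ u n := fun n => hED n
    exact tendsto_of_tendsto_of_tendsto_of_le_of_le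
      ((tendsto_add_atTop_iff_nat 1).2 hutend) hutend hlow hup
  -- generic convergence to g
  have hconv_to_g : ∀ (F : ℕ → X), (∀ n, F n ∈ B - A) →
      Tendsto (fun n => ‖F n‖) atTop (𝓝 d) → Tendsto F atTop (𝓝 g) := by
    intro F hFm hFn
    rw [tendsto_iff_norm_sub_tendsto_zero]
    have hsq : ∀ n, ‖F n - g‖^2 ≤ ‖F n‖^2 - d^2 := by
      intro n
      have hvi := hgVI (F n) (subset_closure (hFm n))
      have hexp : ‖F n - g‖^2 = ‖F n‖^2 - 2*⟪F n, g⟫ + ‖g‖^2 := by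
        rw [@norm_sub_sq_real]
      have hvi2 : ⟪g, F n - g⟫ = ⟪F n, g⟫ - ‖g‖^2 := by
        rw [inner_sub_right, real_inner_comm, real_inner_self_eq_norm_sq]
      simp only [hddef]
      linarith
    have h2 : Tendsto (fun n => ‖F n‖^2 - d^2) atTop (𝓝 0) := by
      have := (hFn.pow 2).sub_const (d^2)
      simpa using this
    have h3 : Tendsto (fun n => ‖F n - g‖^2) atTop (𝓝 0) :=
      squeeze_zero (fun n => sq_nonneg _) hsq h2
    have h4 : Tendsto (fun n => Real.sqrt (‖F n - g‖^2)) atTop (𝓝 0) := by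
      have h5 := (Real.continuous_sqrt.tendsto 0).comp h3
      rw [Real.sqrt_zero] at h5
      exact h5
    convert h4 using 2 with n
    rw [Real.sqrt_sq (norm_nonneg _)]
  have hDg : Tendsto (fun n => D (n+1)) atTop (𝓝 g) :=
    hconv_to_g _ hDm hutend
  have hEg : Tendsto E atTop (𝓝 g) := hconv_to_g _ hEm hEnorm
  have hDfull : Tendsto D atTop (𝓝 g) := (tendsto_add_atTop_iff_nat 1).1 hDg
  -- b increments → 0
  have hbdiff : Tendsto (fun n => b (n+1) - b n) atTop (𝓝 0) := by
    have h1 : Tendsto (fun n => E n - D n) atTop (𝓝 (g - g)) := hEg.sub hDfull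
    rw [sub_self] at h1
    convert h1 using 2 with n
    simp only [hDdef, hEdef]
    abel
  -- ‖b n‖ → ∞
  have hTb : ∀ n : ℕ, T (b n) = b (n+1) := by
    intro n
    rw [hT]
    simp only [Function.comp_apply]
    rw [← ha n, ← hb n]
  have hTcont : Continuous T := by
    rw [hT]
    exact ((hPB.lipschitz hBconv).comp (hPA.lipschitz hAconv)).continuous
  have hbnorm : Tendsto (fun n : ℕ => ‖b n‖) atTop atTop := by
    by_contra hnot
    rw [Filter.tendsto_atTop] at hnot
    push_neg at hnot
    obtain ⟨M, hM⟩ := hnot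
    have hM' : ∃ᶠ n in atTop, ‖b n‖ ≤ M := hM.mono fun n hn => le_of_lt hn
    obtain ⟨φ, hφ, hφM⟩ := Filter.extraction_of_frequently_atTop hM'
    haveI : ProperSpace X := FiniteDimensional.proper ℝ X
    have hmem : ∀ k, b (φ k) ∈ Metric.closedBall (0:X) M := by
      intro k
      rw [Metric.mem_closedBall, dist_zero_right]
      exact hφM k
    obtain ⟨b', _, ψ, hψ, hlim⟩ :=
      tendsto_subseq_of_bounded (Metric.isBounded_closedBall (x := (0:X)) (r := M)) hmem
    set nn : ℕ → ℕ := fun k => φ (ψ k) with hnn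
    have hn : Tendsto nn atTop atTop := (hφ.comp hψ).tendsto_atTop
    have l1 : Tendsto (fun k => b (nn k)) atTop (𝓝 b') := hlim
    have l2 : Tendsto (fun k => b (nn k + 1)) atTop (𝓝 b') := by
      have hd : Tendsto (fun k => b (nn k + 1) - b (nn k)) atTop (𝓝 0) := hbdiff.comp hn
      have := hd.add l1
      rw [zero_add] at this
      convert this using 2 with k
      abel
    have l3 : Tendsto (fun k => b (nn k + 1)) atTop (𝓝 (T b')) := by
      have h5 : Tendsto (fun k => T (b (nn k))) atTop (𝓝 (T b')) :=
        (hTcont.tendsto b').comp l1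
      convert h5 using 2 with k
      rw [hTb]
    exact hfix b' (tendsto_nhds_unique l3 l2)
  -- ‖a n‖ → ∞
  have hanorm : Tendsto (fun n : ℕ => ‖a n‖) atTop atTop := by
    have h1 : ∀ n : ℕ, ‖b (n+1)‖ - u 0 ≤ ‖a (n+2)‖ := by
      intro n
      have h2 : u n ≤ u 0 := hu_anti (Nat.zero_le n)
      have h3 := norm_sub_norm_le (b (n+1)) (D (n+1))
      have h4 : b (n+1) - D (n+1) = a (n+2) := by
        simp only [hDdef]; abel
      rw [h4] at h3
      have h5 : ‖D (n+1)‖ = u n := rfl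
      linarith
    have hb1 : Tendsto (fun n : ℕ => ‖b (n+1)‖ - u 0) atTop atTop :=
      tendsto_atTop_add_const_right _ _ ((tendsto_add_atTop_iff_nat 1).2 hbnorm)
    have ha2 : Tendsto (fun n : ℕ => ‖a (n+2)‖) atTop atTop :=
      tendsto_atTop_mono h1 hb1
    exact (tendsto_add_atTop_iff_nat 2).1 ha2
  -- final: the difference limits
  have hgoal3 : Tendsto (fun n : ℕ => b (n+1) - a (n+1)) atTop (𝓝 g) := hEg
  have hgoal4 : Tendsto (fun n : ℕ => a (n+1) - b n) atTop (𝓝 (-g)) := by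
    have := hDfull.neg
    convert this using 2 with n
    simp only [hDdef]
    abel
  exact ⟨hanorm, hbnorm, hgoal3, hgoal4⟩
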